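/- Let a > 1 with a² ≠ 5, let h ∈ ℝ, set g = √(a²−1) and T = √2·a·π. Then for all ρ ≠ 0 and all s ∈ ℝ, (1/T)·∫₀ᵀ F12(θ,ρ,s) dθ = (sin(π g)·cos(g(πa + √2 s)/a) / (4π·a²·(a²−5)·(a²−1)·ρ)) · (2a²(a²−3)²h + (a²−5)ρ²·(cos(2√2 g s/a) + cos(2g(πa + √2 s)/a) + cos(2g(2πa + √2 s)/a) − cos(2πg)) + 2(−3a⁶ + 21a⁴ − 43a² + 17)ρ²), where F12(θ,ρ,s) = (1/(4a²gρ))·cos(√2 g(θ+s)/a)·((a²−3)(a²(h−3ρ²)+3ρ²)·cos(2√2 θ/a) + (a²−3)a²h − 3(a⁴−4a²+2)ρ² + 3ρ²·cos(2√2 g(θ+s)/a)). -/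

import Mathlib

open Real

lemma int_cos_lin (c d T : ℝ) (hc : c ≠ 0) :
    ∫ θ in (0:ℝ)..T, Real.cos (c * θ + d) = (Real.sin (c * T + d) - Real.sin d) / c := by
  rw [intervalIntegral.integral_comp_mul_add Real.cos hc d, integral_cos]
  simp only [mul_zero, zero_add, smul_eq_mul]
  field_simp

lemma expand_prod (K A B C P Q : ℝ) :
    K * Real.cos P * (A * Real.cos Q + B + C * Real.cos (2*P)) =
      K*A/2 * Real.cos (P+Q) + K*A/2 * Real.cos (P-Q) + (K*B + K*C/2) * Real.cos P
        + K*C/2 * Real.cos (3*P) := by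
  rw [Real.cos_add, Real.cos_sub, Real.cos_two_mul, show (3:ℝ)*P = 2*P+P by ring,
    Real.cos_add, Real.cos_two_mul, Real.sin_two_mul]
  linear_combination (K*C*Real.cos P) * (Real.sin_sq_add_cos_sq P)

lemma int4 (k1 k2 k3 k4 c1 c2 c3 c4 d1 d2 T : ℝ)
    (h1 : c1 ≠ 0) (h2 : c2 ≠ 0) (h3 : c3 ≠ 0) (h4 : c4 ≠ 0) :
    ∫ θ in (0:ℝ)..T, (k1 * Real.cos (c1*θ+d1) + k2 * Real.cos (c2*θ+d1)
      + k3 * Real.cos (c3*θ+d1) + k4 * Real.cos (c4*θ+d2)) =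
      k1 * ((Real.sin (c1*T+d1) - Real.sin d1)/c1)
      + k2 * ((Real.sin (c2*T+d1) - Real.sin d1)/c2)
      + k3 * ((Real.sin (c3*T+d1) - Real.sin d1)/c3)
      + k4 * ((Real.sin (c4*T+d2) - Real.sin d2)/c4) := by
  have I : ∀ k c d : ℝ, IntervalIntegrable (fun θ => k * Real.cos (c*θ+d)) MeasureTheory.volume 0 T := by
    intro k c d
    exact (Continuous.mul continuous_const ((Real.continuous_cos).comp (by continuity))).intervalIntegrable 0 T
  rw [intervalIntegral.integral_add (((I k1 c1 d1).add (I k2 c2 d1)).add (I k3 c3 d1)) (I k4 c4 d2),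
      intervalIntegral.integral_add ((I k1 c1 d1).add (I k2 c2 d1)) (I k3 c3 d1),
      intervalIntegral.integral_add (I k1 c1 d1) (I k2 c2 d1)]
  simp only [intervalIntegral.integral_const_mul]
  rw [int_cos_lin c1 d1 T h1, int_cos_lin c2 d1 T h2, int_cos_lin c3 d1 T h3, int_cos_lin c4 d2 T h4]

set_option maxHeartbeats 4000000 in
theorem averaged_function_f2_closed_form (a h : ℝ) (ha : 1 < a) (ha5 : a ^ 2 ≠ 5)
    (g T : ℝ) (hg : g = Real.sqrt (a ^ 2 - 1)) (hT : T = Real.sqrt 2 * a * π)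
    (F12 : ℝ → ℝ → ℝ → ℝ)
    (hF12 : ∀ θ ρ s : ℝ, F12 θ ρ s =
      (1 / (4 * a ^ 2 * g * ρ)) * Real.cos (Real.sqrt 2 * g * (θ + s) / a) *
        ((a ^ 2 - 3) * (a ^ 2 * (h - 3 * ρ ^ 2) + 3 * ρ ^ 2) * Real.cos (2 * Real.sqrt 2 * θ / a) +
         (a ^ 2 - 3) * a ^ 2 * h - 3 * (a ^ 4 - 4 * a ^ 2 + 2) * ρ ^ 2 +
         3 * ρ ^ 2 * Real.cos (2 * Real.sqrt 2 * g * (θ + s) / a))) :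
    ∀ ρ s : ℝ, ρ ≠ 0 →
      (1 / T) * (∫ θ in (0 : ℝ)..T, F12 θ ρ s) =
        (Real.sin (π * g) * Real.cos (g * (π * a + Real.sqrt 2 * s) / a) /
          (4 * π * a ^ 2 * (a ^ 2 - 5) * (a ^ 2 - 1) * ρ)) *
        (2 * a ^ 2 * (a ^ 2 - 3) ^ 2 * h +
         (a ^ 2 - 5) * ρ ^ 2 *
           (Real.cos (2 * Real.sqrt 2 * g * s / a) +
            Real.cos (2 * g * (π * a + Real.sqrt 2 * s) / a) +
            Real.cos (2 * g * (2 * π * a + Real.sqrt 2 * s) / a) -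
            Real.cos (2 * π * g)) +
         2 * (-3 * a ^ 6 + 21 * a ^ 4 - 43 * a ^ 2 + 17) * ρ ^ 2) := by
  intro ρ s hρ
  have ha0 : (0:ℝ) < a := lt_trans one_pos ha
  have ha0' : a ≠ 0 := ne_of_gt ha0
  have hga : (0:ℝ) < a^2 - 1 := by nlinarith
  have hg2 : g^2 = a^2 - 1 := by rw [hg]; exact Real.sq_sqrt hga.le
  have hgpos : 0 < g := by rw [hg]; exact Real.sqrt_pos.mpr hga
  have hg0 : g ≠ 0 := ne_of_gt hgpos
  have h22 : Real.sqrt 2 * Real.sqrt 2 = 2 := Real.mul_self_sqrt (by norm_num)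
  have hs2 : (0:ℝ) < Real.sqrt 2 := Real.sqrt_pos.mpr (by norm_num)
  have hs2' : Real.sqrt 2 ≠ 0 := ne_of_gt hs2
  have hgp2 : g + 2 ≠ 0 := by positivity
  have hgm2 : g - 2 ≠ 0 := by
    intro hh
    apply ha5
    have : g = 2 := by linarith
    rw [this] at hg2; nlinarith
  have hc1 : Real.sqrt 2*g/a + 2*Real.sqrt 2/a ≠ 0 := by
    rw [show Real.sqrt 2*g/a + 2*Real.sqrt 2/a = Real.sqrt 2*(g+2)/a by ring]
    exact div_ne_zero (mul_ne_zero hs2' hgp2) ha0'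
  have hc2 : Real.sqrt 2*g/a - 2*Real.sqrt 2/a ≠ 0 := by
    rw [show Real.sqrt 2*g/a - 2*Real.sqrt 2/a = Real.sqrt 2*(g-2)/a by ring]
    exact div_ne_zero (mul_ne_zero hs2' hgm2) ha0'
  have hc3 : Real.sqrt 2*g/a ≠ 0 := div_ne_zero (mul_ne_zero hs2' hg0) ha0'
  have hc4 : 3*(Real.sqrt 2*g/a) ≠ 0 := mul_ne_zero (by norm_num) hc3
  have ha5' : a^2 - 5 ≠ 0 := sub_ne_zero.mpr ha5
  have ha1' : a^2 - 1 ≠ 0 := ne_of_gt hga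
  -- pointwise expansion of the integrand
  have key : ∀ θ : ℝ, F12 θ ρ s =
      1/(4*a^2*g*ρ) * ((a^2-3)*(a^2*(h-3*ρ^2)+3*ρ^2)) / 2 *
        Real.cos ((Real.sqrt 2*g/a + 2*Real.sqrt 2/a)*θ + Real.sqrt 2*g/a*s)
      + 1/(4*a^2*g*ρ) * ((a^2-3)*(a^2*(h-3*ρ^2)+3*ρ^2)) / 2 *
        Real.cos ((Real.sqrt 2*g/a - 2*Real.sqrt 2/a)*θ + Real.sqrt 2*g/a*s)
      + (1/(4*a^2*g*ρ) * ((a^2-3)*a^2*h - 3*(a^4-4*a^2+2)*ρ^2) + 1/(4*a^2*g*ρ)*(3*ρ^2)/2) *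
        Real.cos ((Real.sqrt 2*g/a)*θ + Real.sqrt 2*g/a*s)
      + 1/(4*a^2*g*ρ)*(3*ρ^2)/2 *
        Real.cos ((3*(Real.sqrt 2*g/a))*θ + 3*(Real.sqrt 2*g/a*s)) := by
    intro θ
    rw [hF12 θ ρ s,
      show Real.sqrt 2 * g * (θ+s)/a = (Real.sqrt 2*g/a)*θ + Real.sqrt 2*g/a*s by ring,
      show 2*Real.sqrt 2*θ/a = (2*Real.sqrt 2/a)*θ by ring,
      show 2*Real.sqrt 2*g*(θ+s)/a = 2*((Real.sqrt 2*g/a)*θ + Real.sqrt 2*g/a*s) by ring,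
      show (Real.sqrt 2*g/a + 2*Real.sqrt 2/a)*θ + Real.sqrt 2*g/a*s
          = ((Real.sqrt 2*g/a)*θ + Real.sqrt 2*g/a*s) + (2*Real.sqrt 2/a)*θ by ring,
      show (Real.sqrt 2*g/a - 2*Real.sqrt 2/a)*θ + Real.sqrt 2*g/a*s
          = ((Real.sqrt 2*g/a)*θ + Real.sqrt 2*g/a*s) - (2*Real.sqrt 2/a)*θ by ring,
      show (3*(Real.sqrt 2*g/a))*θ + 3*(Real.sqrt 2*g/a*s)
          = 3*((Real.sqrt 2*g/a)*θ + Real.sqrt 2*g/a*s) by ring]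
    linear_combination expand_prod (1/(4*a^2*g*ρ)) ((a^2-3)*(a^2*(h-3*ρ^2)+3*ρ^2))
      ((a^2-3)*a^2*h - 3*(a^4-4*a^2+2)*ρ^2) (3*ρ^2)
      ((Real.sqrt 2*g/a)*θ + Real.sqrt 2*g/a*s) ((2*Real.sqrt 2/a)*θ)
  rw [show (∫ θ in (0:ℝ)..T, F12 θ ρ s)
      = ∫ θ in (0:ℝ)..T,
        (1/(4*a^2*g*ρ) * ((a^2-3)*(a^2*(h-3*ρ^2)+3*ρ^2)) / 2 *
          Real.cos ((Real.sqrt 2*g/a + 2*Real.sqrt 2/a)*θ + Real.sqrt 2*g/a*s)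
        + 1/(4*a^2*g*ρ) * ((a^2-3)*(a^2*(h-3*ρ^2)+3*ρ^2)) / 2 *
          Real.cos ((Real.sqrt 2*g/a - 2*Real.sqrt 2/a)*θ + Real.sqrt 2*g/a*s)
        + (1/(4*a^2*g*ρ) * ((a^2-3)*a^2*h - 3*(a^4-4*a^2+2)*ρ^2) + 1/(4*a^2*g*ρ)*(3*ρ^2)/2) *
          Real.cos ((Real.sqrt 2*g/a)*θ + Real.sqrt 2*g/a*s)
        + 1/(4*a^2*g*ρ)*(3*ρ^2)/2 *
          Real.cos ((3*(Real.sqrt 2*g/a))*θ + 3*(Real.sqrt 2*g/a*s)))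
      from intervalIntegral.integral_congr (fun θ _ => key θ),
    int4 _ _ _ _ _ _ _ _ _ _ T hc1 hc2 hc3 hc4]
  have hαT : Real.sqrt 2*g/a*T = 2*π*g := by
    rw [hT, show Real.sqrt 2*g/a*(Real.sqrt 2*a*π) = (Real.sqrt 2*Real.sqrt 2)*g*π*(a/a) by ring, h22, div_self ha0']; ring
  have hβT : 2*Real.sqrt 2/a*T = 4*π := by
    rw [hT, show 2*Real.sqrt 2/a*(Real.sqrt 2*a*π) = 2*(Real.sqrt 2*Real.sqrt 2)*π*(a/a) by ring, h22, div_self ha0']; ring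
  rw [show (Real.sqrt 2*g/a + 2*Real.sqrt 2/a)*T + Real.sqrt 2*g/a*s
        = (π*g + (π*g + Real.sqrt 2*g/a*s)) + 2*π + 2*π by linear_combination hαT + hβT,
      Real.sin_add_two_pi, Real.sin_add_two_pi,
      show (Real.sqrt 2*g/a - 2*Real.sqrt 2/a)*T + Real.sqrt 2*g/a*s
        = (π*g + (π*g + Real.sqrt 2*g/a*s)) - 2*π - 2*π by linear_combination hαT - hβT,
      Real.sin_sub_two_pi, Real.sin_sub_two_pi,
      show Real.sqrt 2*g/a*T + Real.sqrt 2*g/a*s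
        = π*g + (π*g + Real.sqrt 2*g/a*s) by linear_combination hαT,
      show (3*(Real.sqrt 2*g/a))*T + 3*(Real.sqrt 2*g/a*s)
        = 3*(π*g + (π*g + Real.sqrt 2*g/a*s)) by linear_combination 3*hαT,
      show Real.sin (Real.sqrt 2*g/a*s)
        = Real.sin ((π*g + Real.sqrt 2*g/a*s) - π*g) by rw [add_sub_cancel_left],
      show Real.sin (3*(Real.sqrt 2*g/a*s))
        = Real.sin (3*((π*g + Real.sqrt 2*g/a*s) - π*g)) by rw [add_sub_cancel_left],
      show g*(π*a+Real.sqrt 2*s)/a = π*g + Real.sqrt 2*g/a*s by field_simp,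
      show 2*Real.sqrt 2*g*s/a = 2*((π*g + Real.sqrt 2*g/a*s) - π*g) by
        rw [add_sub_cancel_left]; ring,
      show 2*g*(π*a+Real.sqrt 2*s)/a = 2*(π*g + Real.sqrt 2*g/a*s) by field_simp,
      show 2*g*(2*π*a+Real.sqrt 2*s)/a = 2*(π*g + (π*g + Real.sqrt 2*g/a*s)) by field_simp; ring,
      show 2*π*g = 2*(π*g) by ring]
  generalize hy : π*g + Real.sqrt 2*g/a*s = y
  generalize hx : π*g = x
  simp only [Real.sin_three_mul, Real.cos_two_mul, Real.sin_add, Real.sin_sub,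
    Real.cos_add, Real.cos_sub]
  have px := Real.sin_sq_add_cos_sq x
  have py := Real.sin_sq_add_cos_sq y
  generalize hsx : Real.sin x = sx at px ⊢
  generalize hcx : Real.cos x = cx at px ⊢
  generalize hsy : Real.sin y = sy at py ⊢
  generalize hcy : Real.cos y = cy at py ⊢
  rw [hT]
  generalize hr : Real.sqrt 2 = r at h22 hc1 hc2 hc3 hc4 ⊢
  have hr0 : r ≠ 0 := by intro hh; rw [hh] at h22; norm_num at h22
  rw [show r*g/a + 2*r/a = r*(g+2)/a by ring, show r*g/a - 2*r/a = r*(g-2)/a by ring]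
  have hπ : π ≠ 0 := Real.pi_ne_zero
  field_simp
  ring_nf
  linear_combination (-4*sx*cy*g^4*a^6*h + 24*sx*cy*g^4*a^4*h + -36*sx*cy*g^4*a^2*h + -8*sx*cx^2*cy^3*g^4*a^2*ρ^2 + -8*sx^3*sy^2*cy*g^4*a^2*ρ^2 + 176*sx*cy*g^4*a^2*ρ^2 + -4*sx*cy^3*g^4*a^2*ρ^2 + 4*sx*cx^2*cy*g^4*a^2*ρ^2 + 40*sx*cx^2*cy^3*g^4*ρ^2 + 40*sx^3*sy^2*cy*g^4*ρ^2 + -88*sx*cy*g^4*ρ^2 + 20*sx*cy^3*g^4*ρ^2 + -20*sx*cx^2*cy*g^4*ρ^2 + 12*sx*cy*g^4*a^6*ρ^2 + -84*sx*cy*g^4*a^4*ρ^2 + 16*sx*cy*g^2*a^6*h + -96*sx*cy*g^2*a^4*h + 144*sx*cy*g^2*a^2*h + 32*sx*cx^2*cy^3*g^2*a^2*ρ^2 + 32*sx^3*sy^2*cy*g^2*a^2*ρ^2 + -704*sx*cy*g^2*a^2*ρ^2 + 16*sx*cy^3*g^2*a^2*ρ^2 + -16*sx*cx^2*cy*g^2*a^2*ρ^2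 + -160*sx*cx^2*cy^3*g^2*ρ^2 + -160*sx^3*sy^2*cy*g^2*ρ^2 + 352*sx*cy*g^2*ρ^2 + -80*sx*cy^3*g^2*ρ^2 + 80*sx*cx^2*cy*g^2*ρ^2 + -48*sx*cy*g^2*a^6*ρ^2 + 336*sx*cy*g^2*a^4*ρ^2) * h22 + (16*sx*cy*a^6*h + -128*sx*cy*a^4*h + -48*sx*cy*a^6*ρ^2 + 448*sx*cy*a^4*ρ^2 + -1168*sx*cy*a^2*ρ^2 + 240*sx*cy*a^2*h + 640*sx*cy*ρ^2 + -8*sx^3*cy^3*a^4*ρ^2 + 48*sx^3*cy^3*a^2*ρ^2 + -40*sx^3*cy^3*ρ^2 + -24*sx*cx^2*sy^2*cy*a^4*ρ^2 + 144*sx*cx^2*sy^2*cy*a^2*ρ^2 + -120*sx*cx^2*sy^2*cy*ρ^2 + -8*sx*cy*g^2*a^6*h + 48*sx*cy*g^2*a^4*h + -72*sx*cy*g^2*a^2*h + -16*sx*cx^2*cy^3*g^2*a^2*ρ^2 + -16*sx^3*sy^2*cy*g^2*a^2*ρ^2 + 352*sx*cy*g^2*a^2*ρ^2 + -8*sx*cy^3*g^2*a^2*ρ^2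 + 8*sx*cx^2*cy*g^2*a^2*ρ^2 + 80*sx*cx^2*cy^3*g^2*ρ^2 + 80*sx^3*sy^2*cy*g^2*ρ^2 + -176*sx*cy*g^2*ρ^2 + 40*sx*cy^3*g^2*ρ^2 + -40*sx*cx^2*cy*g^2*ρ^2 + 24*sx*cy*g^2*a^6*ρ^2 + -168*sx*cy*g^2*a^4*ρ^2 + 160*sx*cx^2*cy^3*a^2*ρ^2 + 160*sx^3*sy^2*cy*a^2*ρ^2 + 80*sx*cy^3*a^2*ρ^2 + -80*sx*cx^2*cy*a^2*ρ^2 + -400*sx*cx^2*cy^3*ρ^2 + -400*sx^3*sy^2*cy*ρ^2 + -200*sx*cy^3*ρ^2 + 200*sx*cx^2*cy*ρ^2 + -16*sx*cx^2*cy^3*a^4*ρ^2 + -16*sx^3*sy^2*cy*a^4*ρ^2 + -8*sx*cy^3*a^4*ρ^2 + 8*sx*cx^2*cy*a^4*ρ^2) * hg2 + (88*sx*cy^3*a^4*ρ^2 + -280*sx*cy^3*a^2*ρ^2 + 200*sx*cy^3*ρ^2 + -8*sx*cy^3*a^6*ρ^2 + 176*sx*sy^2*cy*a^4*ρ^2 +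 -560*sx*sy^2*cy*a^2*ρ^2 + 400*sx*sy^2*cy*ρ^2 + -16*sx*sy^2*cy*a^6*ρ^2) * px + (88*sx*cx^2*cy*a^4*ρ^2 + -280*sx*cx^2*cy*a^2*ρ^2 + 200*sx*cx^2*cy*ρ^2 + -8*sx*cx^2*cy*a^6*ρ^2 + 176*sx*cy*a^4*ρ^2 + -560*sx*cy*a^2*ρ^2 + 400*sx*cy*ρ^2 + -16*sx*cy*a^6*ρ^2) * py
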